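/- There exists a finite bipartite Helly graph that does not satisfy the pairing property, and there exists a finite bipartite Helly graph that does not satisfy the double-pairing property. -/

import Mathlib

namespace ArxivABC

variable {V : Type*}

/-- The metric interval `I(u,v)` between two vertices `u` and `v`. -/
def interval (G : SimpleGraph V) (u v : V) : Set V :=
  {w | G.dist u w + G.dist w v = G.dist u v}

/-- An ABC-function on `G`: a consensus function (profiles are finite multisets of
vertices, so anonymity (A) is built in) returning nonempty sets of vertices, and satisfying
betweenness (B) and consistency (C). -/
structure IsABC (G : SimpleGraph V) (L : Multiset V → Set V) : Prop where
  nonempty : ∀ π : Multiset V, (L π).Nonempty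
  betweenness : ∀ u v : V, L {u, v} = interval G u v
  consistency : ∀ π ρ : Multiset V, (L π ∩ L ρ).Nonempty → L (π + ρ) = L π ∩ L ρ

/-- The total distance `F_π(v)` of a vertex `v` with respect to a profile `π`. -/
noncomputable def cost (G : SimpleGraph V) (π : Multiset V) (v : V) : ℕ :=
  (π.map (G.dist v)).sum

/-- The median set of a profile. -/
def median (G : SimpleGraph V) (π : Multiset V) : Set V :=
  {v | ∀ w, cost G π v ≤ cost G π w}

/-- `P` is a pairing of the (even) profile `π`: a partition of the multiset `π`
into pairs. -/
def IsPairing (π : Multiset V) (P : Multiset (V × V)) : Prop :=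
  P.map Prod.fst + P.map Prod.snd = π

/-- `D_π(P) = Σ_{{a,b} ∈ P} d(a,b)`. -/
noncomputable def pairingCost (G : SimpleGraph V) (P : Multiset (V × V)) : ℕ :=
  (P.map fun p => G.dist p.1 p.2).sum

/-- The profile `π` admits a perfect pairing: a pairing `P` and a vertex `v` with
`D_π(P) = F_π(v)`. -/
def HasPerfectPairing (G : SimpleGraph V) (π : Multiset V) : Prop :=
  ∃ (P : Multiset (V × V)) (v : V), IsPairing π P ∧ pairingCost G P = cost G π v

/-- The pairing property: every even profile admits a perfect pairing. -/
def PairingProperty (G : SimpleGraph V) : Prop :=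
  ∀ π : Multiset V, Even (Multiset.card π) → HasPerfectPairing G π

/-- The double-pairing property: for every profile `π` the double profile `ππ`
admits a perfect pairing. -/
def DoublePairingProperty (G : SimpleGraph V) : Prop :=
  ∀ π : Multiset V, HasPerfectPairing G (π + π)

/-- A half-ball: the intersection of the ball `B_r(v)` with a color class of the
2-coloring `c`. -/
def halfBall (G : SimpleGraph V) (c : V → Bool) (v : V) (r : ℕ) (b : Bool) : Set V :=
  {x | G.dist v x ≤ r ∧ c x = b}

/-- A bipartite Helly graph: a connected bipartite graph in which the family of
half-balls has the Helly property (every finite family of pairwise intersecting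
half-balls has a common vertex). -/
def IsBipartiteHelly (G : SimpleGraph V) : Prop :=
  G.Connected ∧ ∃ c : V → Bool, (∀ u v : V, G.Adj u v → c u ≠ c v) ∧
    ∀ (n : ℕ) (v : Fin n → V) (r : Fin n → ℕ) (b : Fin n → Bool),
      (∀ i j : Fin n,
        (halfBall G c (v i) (r i) (b i) ∩ halfBall G c (v j) (r j) (b j)).Nonempty) →
      (⋂ i : Fin n, halfBall G c (v i) (r i) (b i)).Nonempty

/-- The complete bipartite graph K_{3,3} on `Fin 6`. -/
def K33 : SimpleGraph (Fin 6) where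
  Adj u v := ¬ ((u.val < 3) ↔ (v.val < 3))
  symm := ⟨fun _ _ h h2 => h h2.symm⟩
  loopless := ⟨fun _ h => h Iff.rfl⟩

lemma k33_adj {u v : Fin 6} : K33.Adj u v ↔ ¬ ((u.val < 3) ↔ (v.val < 3)) := Iff.rfl

/-- Explicit distance function on K33. -/
def df (u v : Fin 6) : ℕ :=
  if u = v then 0 else if (u.val < 3) ↔ (v.val < 3) then 2 else 1

lemma dist_eq (u v : Fin 6) : K33.dist u v = df u v := by
  unfold df
  split_ifs with h1 h2
  · subst h1; exact SimpleGraph.dist_self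
  · have h3v : ¬ ((3 : Fin 6).val < 3) := by decide
    have h0v : (0 : Fin 6).val < 3 := by decide
    have hw : ∃ w, K33.Adj u w ∧ K33.Adj w v := by
      by_cases hu : u.val < 3
      · exact ⟨3, fun hiff => h3v (hiff.mp hu),
          fun hiff => h3v (hiff.mpr (h2.mp hu))⟩
      · exact ⟨0, fun hiff => hu (hiff.mpr h0v),
          fun hiff => (fun hv => hu (h2.mpr hv)) (hiff.mp h0v)⟩
    obtain ⟨w, hw1, hw2⟩ := hw
    have hle : K33.dist u v ≤ 2 := by
      have := SimpleGraph.dist_le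
        (SimpleGraph.Walk.cons hw1 (SimpleGraph.Walk.cons hw2 SimpleGraph.Walk.nil))
      simpa [SimpleGraph.Walk.length_cons, SimpleGraph.Walk.length_nil] using this
    have hr : K33.Reachable u v :=
      ⟨SimpleGraph.Walk.cons hw1 (SimpleGraph.Walk.cons hw2 SimpleGraph.Walk.nil)⟩
    have h0 : K33.dist u v ≠ 0 := fun h => h1 (hr.dist_eq_zero_iff.mp h)
    have hne1 : K33.dist u v ≠ 1 :=
      fun h' => (SimpleGraph.dist_eq_one_iff_adj.mp h') h2
    omega
  · rw [SimpleGraph.dist_eq_one_iff_adj]; exact h2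

lemma dist_le_two (u v : Fin 6) : K33.dist u v ≤ 2 := by
  rw [dist_eq]; unfold df; split_ifs <;> omega

lemma k33_conn : K33.Connected := by
  have hpre : K33.Preconnected := by
    intro u v
    by_cases h2 : (u.val < 3) ↔ (v.val < 3)
    · by_cases h1 : u = v
      · subst h1; exact SimpleGraph.Reachable.refl u
      · have h3v : ¬ ((3 : Fin 6).val < 3) := by decide
        have h0v : (0 : Fin 6).val < 3 := by decide
        by_cases hu : u.val < 3
        · exact (SimpleGraph.Adj.reachable (G := K33)
            (fun hiff => h3v (hiff.mp hu))).trans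
            (SimpleGraph.Adj.reachable (fun hiff => h3v (hiff.mpr (h2.mp hu))))
        · exact (SimpleGraph.Adj.reachable (G := K33)
            (fun hiff => hu (hiff.mpr h0v))).trans
            (SimpleGraph.Adj.reachable
              (fun hiff => (fun hv => hu (h2.mpr hv)) (hiff.mp h0v)))
    · exact SimpleGraph.Adj.reachable h2
  exact ⟨hpre⟩

def cK : Fin 6 → Bool := fun v => decide (v.val < 3)

lemma cK_eq_iff {x y : Fin 6} : cK x = cK y ↔ (x.val < 3 ↔ y.val < 3) := by
  simp [cK, decide_eq_decide]

lemma k33_bip : ∀ u v : Fin 6, K33.Adj u v → cK u ≠ cK v :=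
  fun _ _ hadj hc => hadj (cK_eq_iff.mp hc)

lemma small_or_big (v : Fin 6) (r : ℕ) (b : Bool)
    (hne : (halfBall K33 cK v r b).Nonempty) :
    (halfBall K33 cK v r b = {v}) ∨
      (∀ x : Fin 6, cK x = b → x ∈ halfBall K33 cK v r b) := by
  by_cases hcv : cK v = b
  · by_cases hr : r ≤ 1
    · left
      ext x
      simp only [Set.mem_singleton_iff]
      constructor
      · rintro ⟨hd, hcx⟩
        by_contra hx
        have hside : v.val < 3 ↔ x.val < 3 := (cK_eq_iff.mp (hcv.trans hcx.symm))
        have h2 : K33.dist v x = 2 := by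
          rw [dist_eq]; unfold df
          rw [if_neg (fun h => hx h.symm), if_pos hside]
        omega
      · rintro rfl
        exact ⟨by rw [dist_eq]; simp [df], hcv⟩
    · right
      intro x hx
      exact ⟨le_trans (dist_le_two v x) (by omega), hx⟩
  · have hr1 : 1 ≤ r := by
      obtain ⟨y, hd, hcy⟩ := hne
      have hyv : v ≠ y := fun h => hcv (h ▸ hcy)
      by_contra hr0
      have hr0' : r = 0 := by omega
      subst hr0'
      have h0 : K33.dist v y = 0 := Nat.le_zero.mp hd
      rw [dist_eq] at h0
      unfold df at h0
      split_ifs at h0 with hh hh2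
      · exact hyv hh
      
    right
    intro x hx
    have hvx : v ≠ x := fun h => hcv (h ▸ hx)
    have hside : ¬ (v.val < 3 ↔ x.val < 3) :=
      fun hiff => hcv ((cK_eq_iff.mpr hiff).trans hx)
    refine ⟨?_, hx⟩
    rw [dist_eq]
    unfold df
    rw [if_neg hvx, if_neg hside]
    exact hr1

lemma k33_helly : ∀ (n : ℕ) (v : Fin n → Fin 6) (r : Fin n → ℕ) (b : Fin n → Bool),
    (∀ i j : Fin n,
      (halfBall K33 cK (v i) (r i) (b i) ∩ halfBall K33 cK (v j) (r j) (b j)).Nonempty) →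
    (⋂ i : Fin n, halfBall K33 cK (v i) (r i) (b i)).Nonempty := by
  intro n v r b h
  by_cases hs : ∃ i, halfBall K33 cK (v i) (r i) (b i) = {v i}
  · obtain ⟨i0, hi0⟩ := hs
    refine ⟨v i0, Set.mem_iInter.mpr fun j => ?_⟩
    obtain ⟨y, hy1, hy2⟩ := h i0 j
    rw [hi0] at hy1
    exact Set.mem_singleton_iff.mp hy1 ▸ hy2
  · push_neg at hs
    have big : ∀ i, ∀ x : Fin 6, cK x = b i → x ∈ halfBall K33 cK (v i) (r i) (b i) := by
      intro i
      rcases small_or_big (v i) (r i) (b i)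
        (by obtain ⟨y, hy, _⟩ := h i i; exact ⟨y, hy⟩) with hsm | hbig
      · exact absurd hsm (hs i)
      · exact hbig
    cases n with
    | zero => exact ⟨0, Set.mem_iInter.mpr (fun i => i.elim0)⟩
    | succ m =>
      have hball : ∀ j, b j = b 0 := by
        intro j
        obtain ⟨y, hy1, hy2⟩ := h 0 j
        exact hy2.2.symm.trans hy1.2
      refine ⟨if b 0 then 0 else 3, Set.mem_iInter.mpr fun j => ?_⟩
      apply big
      rw [hball j]
      cases hb0 : b 0 <;> decide

def π₆ : Multiset (Fin 6) := {0, 1, 2, 3, 4, 5}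

lemma cost_pi (v : Fin 6) : cost K33 π₆ v = 7 := by
  have hm : π₆.map (K33.dist v) = π₆.map (df v) :=
    Multiset.map_congr rfl fun x _ => dist_eq v x
  have hd : ∀ w : Fin 6, (π₆.map (df w)).sum = 7 := by decide
  unfold cost
  rw [hm, hd]

lemma pc_le (P : Multiset (Fin 6 × Fin 6)) :
    pairingCost K33 P ≤ 2 * Multiset.card P := by
  unfold pairingCost
  have h := Multiset.sum_le_card_nsmul (P.map fun p => K33.dist p.1 p.2) 2
    (by
      intro x hx
      obtain ⟨p, _, rfl⟩ := Multiset.mem_map.mp hx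
      exact dist_le_two p.1 p.2)
  simpa [Multiset.card_map, smul_eq_mul, Nat.mul_comm] using h

lemma card_of_pairing {π : Multiset (Fin 6)} {P : Multiset (Fin 6 × Fin 6)}
    (h : IsPairing π P) : Multiset.card π = 2 * Multiset.card P := by
  have := congrArg Multiset.card h
  simp only [Multiset.card_add, Multiset.card_map] at this
  omega


/-- Proposition 28: there exist bipartite Helly graphs which do not satisfy the
pairing property (respectively, the double-pairing property). -/
theorem stmt_16 :
    (∃ (n : ℕ) (G : SimpleGraph (Fin n)), IsBipartiteHelly G ∧ ¬ PairingProperty G) ∧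
    (∃ (n : ℕ) (G : SimpleGraph (Fin n)),
      IsBipartiteHelly G ∧ ¬ DoublePairingProperty G) := by
  have hBH : IsBipartiteHelly K33 := ⟨k33_conn, cK, k33_bip, k33_helly⟩
  constructor
  · refine ⟨6, K33, hBH, ?_⟩
    intro hPP
    obtain ⟨P, v, hP, he⟩ := hPP π₆ ⟨3, rfl⟩
    have h1 : pairingCost K33 P ≤ 2 * Multiset.card P := pc_le P
    have h2 : Multiset.card π₆ = 2 * Multiset.card P := card_of_pairing hP
    have h3 : Multiset.card π₆ = 6 := rfl
    rw [cost_pi] at he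
    omega
  · refine ⟨6, K33, hBH, ?_⟩
    intro hDP
    obtain ⟨P, v, hP, he⟩ := hDP π₆
    have h1 : pairingCost K33 P ≤ 2 * Multiset.card P := pc_le P
    have h2 : Multiset.card (π₆ + π₆) = 2 * Multiset.card P := card_of_pairing hP
    have h3 : Multiset.card (π₆ + π₆) = 12 := rfl
    have h4 : cost K33 (π₆ + π₆) v = 14 := by
      unfold cost
      rw [Multiset.map_add, Multiset.sum_add]
      have := cost_pi v
      unfold cost at this
      omega
    rw [h4] at he
    omega


end ArxivABC
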